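/- Let J be symmetric positive definite with λ_min(J) ≥ γ, and let u be a unit vector with J Δu = δu - r, u^T Δu = 0, Δu ≠ 0. Define, for θ ∈ (0,1], w = u + θΔu and d(θ) = 2(1/∥w∥ - 1) r^T u + (2θ/∥w∥) r^T Δu + R, with r^T u ≥ 0 and |R| ≤ M θ²∥Δu∥². Then for any η̄ > 0, whenever 0 < θ ≤ (2η̄ γ)/((1+η̄) M ∥w∥), one has d(θ) ≤ -(2θ/((1+η̄)∥w∥)) Δu^T J Δu < 0. -/

import Mathlib

open scoped Matrix

/-- The Euclidean norm on `Fin n → ℝ`. -/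
noncomputable def euclidNormFin {n : ℕ} (x : Fin n → ℝ) : ℝ := Real.sqrt (∑ i, x i ^ 2)

lemma quad_lb {n : ℕ} (J : Matrix (Fin n) (Fin n) ℝ) (hJh : J.IsHermitian)
    (γ : ℝ) (hmin : ∀ i, γ ≤ hJh.eigenvalues i) (x : Fin n → ℝ) :
    γ * (∑ i, x i ^ 2) ≤ x ⬝ᵥ J.mulVec x := by
  set U : Matrix (Fin n) (Fin n) ℝ := (hJh.eigenvectorUnitary : Matrix (Fin n) (Fin n) ℝ)
  have hps : (J - γ • (1 : Matrix (Fin n) (Fin n) ℝ)).PosSemidef := by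
    have h1 : J - γ • (1 : Matrix (Fin n) (Fin n) ℝ)
        = U * (Matrix.diagonal (fun i => hJh.eigenvalues i - γ)) * (star U) := by
      have hsp := hJh.spectral_theorem
      rw [Unitary.conjStarAlgAut_apply] at hsp
      have hUU : U * (star U) = 1 := Matrix.mem_unitaryGroup_iff.mp hJh.eigenvectorUnitary.2
      have hγ1 : γ • (1 : Matrix (Fin n) (Fin n) ℝ) = U * (γ • 1) * (star U) := by
        rw [Matrix.mul_smul, Matrix.smul_mul, Matrix.mul_one, hUU]
      calc J - γ • (1 : Matrix (Fin n) (Fin n) ℝ)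
          = U * (Matrix.diagonal (RCLike.ofReal ∘ hJh.eigenvalues) - γ • 1) * (star U) := by
            rw [Matrix.mul_sub, Matrix.sub_mul, ← hsp, ← hγ1]
        _ = U * (Matrix.diagonal (fun i => hJh.eigenvalues i - γ)) * (star U) := by
            congr 1
            congr 1
            rw [Matrix.smul_one_eq_diagonal, Matrix.diagonal_sub]
            rfl
    rw [h1]
    exact (Matrix.posSemidef_diagonal_iff.mpr fun i => sub_nonneg.mpr (hmin i)).mul_mul_conjTranspose_same U
  have := hps.dotProduct_mulVec_nonneg x
  have hsx : star x = x := by simp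
  rw [hsx, Matrix.sub_mulVec, Matrix.smul_mulVec, Matrix.one_mulVec,
    dotProduct_sub, dotProduct_smul] at this
  have hxx : x ⬝ᵥ x = ∑ i, x i ^ 2 := by
    simp [dotProduct, pow_two]
  rw [hxx, smul_eq_mul] at this
  linarith [this]

/-- Step-size analysis: under the stated hypotheses, for any `η̄ > 0` and any
`0 < θ ≤ 2η̄γ/((1+η̄) M ‖w‖)`, the descent quantity satisfies
`d(θ) ≤ -(2θ/((1+η̄)‖w‖)) Δuᵀ J Δu < 0`. -/
theorem stmt18 {n : ℕ} (J : Matrix (Fin n) (Fin n) ℝ) (hJh : J.IsHermitian)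
    (γ : ℝ) (hγ : 0 < γ) (hmin : ∀ i, γ ≤ hJh.eigenvalues i)
    (u r Δu w : Fin n → ℝ) (δ θ M ηbar R d : ℝ)
    (hu : euclidNormFin u = 1)
    (hsys : J.mulVec Δu = δ • u - r) (horth : u ⬝ᵥ Δu = 0)
    (hΔ : Δu ≠ 0) (hθ1 : θ ≤ 1)
    (hw : w = u + θ • Δu)
    (hd : d = 2 * (1 / euclidNormFin w - 1) * (r ⬝ᵥ u) + (2 * θ / euclidNormFin w) * (r ⬝ᵥ Δu) + R)
    (hru : 0 ≤ r ⬝ᵥ u) (hR : |R| ≤ M * θ ^ 2 * euclidNormFin Δu ^ 2)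
    (hM : 0 < M) (hη : 0 < ηbar)
    (hθpos : 0 < θ) (hθle : θ ≤ 2 * ηbar * γ / ((1 + ηbar) * M * euclidNormFin w)) :
    d ≤ -(2 * θ / ((1 + ηbar) * euclidNormFin w)) * (Δu ⬝ᵥ J.mulVec Δu) ∧
    -(2 * θ / ((1 + ηbar) * euclidNormFin w)) * (Δu ⬝ᵥ J.mulVec Δu) < 0 := by
  set S : ℝ := ∑ i, Δu i ^ 2 with hS
  set q : ℝ := Δu ⬝ᵥ J.mulVec Δu with hqdef
  -- positivity of S
  have hSnn : 0 ≤ S := Finset.sum_nonneg fun i _ => sq_nonneg _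
  have hSpos : 0 < S := by
    obtain ⟨i, hi⟩ := Function.ne_iff.mp hΔ
    exact Finset.sum_pos' (fun j _ => sq_nonneg _)
      ⟨i, Finset.mem_univ i, pow_two_pos_of_ne_zero hi⟩
  have hN2 : euclidNormFin Δu ^ 2 = S := Real.sq_sqrt hSnn
  -- quadratic form bound
  have hq : γ * S ≤ q := quad_lb J hJh γ hmin Δu
  have hqpos : 0 < q := lt_of_lt_of_le (by positivity) hq
  -- r ⬝ Δu = -q
  have hr : r = δ • u - J.mulVec Δu := by rw [hsys]; ring_nf
  have hrΔ : r ⬝ᵥ Δu = -q := by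
    rw [hr, sub_dotProduct, smul_dotProduct, horth,
      dotProduct_comm]
    simp [hqdef]
  -- norm of w
  have hu2 : ∑ i, u i ^ 2 = 1 := by
    have : Real.sqrt (∑ i, u i ^ 2) = 1 := hu
    nlinarith [Real.sq_sqrt (Finset.sum_nonneg fun i (_ : i ∈ Finset.univ) => sq_nonneg (u i)), this]
  set W : ℝ := euclidNormFin w with hWdef
  have hW2 : W ^ 2 = 1 + θ ^ 2 * S := by
    have h1 : ∑ i, w i ^ 2 = 1 + θ ^ 2 * S := by
      have : ∀ i, w i ^ 2 = u i ^ 2 + 2 * θ * (u i * Δu i) + θ ^ 2 * Δu i ^ 2 := by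
        intro i; rw [hw]; simp [Pi.add_apply, Pi.smul_apply]; ring
      simp_rw [this, Finset.sum_add_distrib, ← Finset.mul_sum, hu2]
      have : ∑ i, u i * Δu i = 0 := horth
      rw [this]; ring
    rw [hWdef, euclidNormFin, Real.sq_sqrt (by rw [h1]; positivity), h1]
  have hWnn : 0 ≤ W := by rw [hWdef, euclidNormFin]; exact Real.sqrt_nonneg _
  have hW1 : 1 ≤ W := by
    nlinarith [hW2, hWnn, mul_nonneg (sq_nonneg θ) hSnn]
  have hWpos : 0 < W := lt_of_lt_of_le one_pos hW1
  have hWne : W ≠ 0 := ne_of_gt hWpos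
  have hApos : 0 < (1 + ηbar) * W := by positivity
  -- the step-size bound, cleared of division
  have hθle' : θ * ((1 + ηbar) * M * W) ≤ 2 * ηbar * γ := by
    rw [← le_div_iff₀ (by positivity)]
    exact hθle
  -- bound on R
  have hRle : R ≤ M * θ ^ 2 * S := by
    have := (abs_le.mp hR).2
    rwa [hN2] at this
  constructor
  · rw [hd, hrΔ, show -(2 * θ / ((1 + ηbar) * W)) * q = (-(2 * θ * q)) / ((1 + ηbar) * W) by ring,
      le_div_iff₀ hApos]
    have e1 : (2 * (1 / W - 1) * (r ⬝ᵥ u) + 2 * θ / W * (-q) + R) * ((1 + ηbar) * W)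
        = 2 * (1 - W) * (r ⬝ᵥ u) * (1 + ηbar) - 2 * θ * q * (1 + ηbar) + R * ((1 + ηbar) * W) := by
      field_simp
      ring
    rw [e1]
    have t1 : 0 ≤ (W - 1) * (r ⬝ᵥ u) * (1 + ηbar) :=
      mul_nonneg (mul_nonneg (by linarith) hru) (by positivity)
    have k0 : R * ((1 + ηbar) * W) ≤ M * θ ^ 2 * S * ((1 + ηbar) * W) :=
      mul_le_mul_of_nonneg_right hRle (le_of_lt hApos)
    have k1 : θ * S * (θ * ((1 + ηbar) * M * W)) ≤ θ * S * (2 * ηbar * γ) :=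
      mul_le_mul_of_nonneg_left hθle' (by positivity)
    have k2 : (θ * ηbar) * (γ * S) ≤ (θ * ηbar) * q :=
      mul_le_mul_of_nonneg_left hq (by positivity)
    linarith [t1, k0, k1, k2]
  · have : 0 < 2 * θ / ((1 + ηbar) * W) * q := by positivity
    linarith
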